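/- Let A be an m×n real matrix, b ∈ ℝᵐ, and 1 ≤ h < m. Suppose there exist real scalars ξ_{ij} for h+1 ≤ i ≤ m and 1 ≤ j ≤ h such that every row of A beyond the h-th is a tropical linear combination of the first h rows: A_{ic} = max_{1≤j≤h} ( A_{jc} + ξ_{ij} ) for all columns c ∈ {1,…,n} and all i ∈ {h+1,…,m}. If the system A ⊙ X = b has a solution X ∈ ℝⁿ, then the compatibility equalities b_i = max_{1≤j≤h} ( b_j + ξ_{ij} ) hold for every i ∈ {h+1,…,m}. -/

import Mathlib

open Matrix

/-- row analysis, necessity of compatibility: Let `A` be an `m × (n+1)` real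
matrix, `b ∈ ℝ^m`, `1 ≤ h < m`. Suppose there are scalars `ξ i j` (for rows `i` beyond the
`h`-th and `j` among the first `h` row indices) such that every row of `A` beyond the `h`-th
is a tropical linear combination of the first `h` rows:
`A i c = max_{j < h} (A j c + ξ i j)` for all columns `c` and all rows `i` with `h ≤ i`.
If the max-plus system `A ⊙ X = b` has a solution `X`, then the compatibility equalities
`b i = max_{j < h} (b j + ξ i j)` hold for every row `i` with `h ≤ i`. -/
theorem stmt11 {m n h : ℕ} (hh : 1 ≤ h) (hhm : h < m)
    (A : Matrix (Fin m) (Fin (n+1)) ℝ) (b : Fin m → ℝ)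
    (ξ : Fin m → Fin h → ℝ)
    (hξ : ∀ i : Fin m, h ≤ (i : ℕ) → ∀ c : Fin (n+1),
      A i c = Finset.univ.sup' ⟨⟨0, hh⟩, Finset.mem_univ _⟩
        (fun j : Fin h => A (Fin.castLE hhm.le j) c + ξ i j))
    (X : Fin (n+1) → ℝ)
    (hX : ∀ i, Finset.univ.sup' ⟨0, Finset.mem_univ 0⟩
        (fun j : Fin (n+1) => A i j + X j) = b i) :
    ∀ i : Fin m, h ≤ (i : ℕ) →
      b i = Finset.univ.sup' ⟨⟨0, hh⟩, Finset.mem_univ _⟩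
        (fun j : Fin h => b (Fin.castLE hhm.le j) + ξ i j) := by
  intro i hi
  rw [← hX i]
  calc Finset.univ.sup' ⟨0, Finset.mem_univ 0⟩ (fun c : Fin (n+1) => A i c + X c)
      = Finset.univ.sup' ⟨0, Finset.mem_univ 0⟩ (fun c : Fin (n+1) =>
          Finset.univ.sup' ⟨⟨0, hh⟩, Finset.mem_univ _⟩
            (fun j : Fin h => (A (Fin.castLE hhm.le j) c + ξ i j) + X c)) := by
        apply Finset.sup'_congr _ rfl
        intro c _
        rw [hξ i hi c]; exact Finset.sup'_add _ _ _ _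
    _ = Finset.univ.sup' ⟨⟨0, hh⟩, Finset.mem_univ _⟩ (fun j : Fin h =>
          Finset.univ.sup' ⟨0, Finset.mem_univ 0⟩
            (fun c : Fin (n+1) => (A (Fin.castLE hhm.le j) c + X c) + ξ i j)) := by
        refine (Finset.sup'_comm _ _ _).trans ?_
        congr 1; ext j; congr 1; ext c; ring
    _ = Finset.univ.sup' ⟨⟨0, hh⟩, Finset.mem_univ _⟩
          (fun j : Fin h => b (Fin.castLE hhm.le j) + ξ i j) := by
        apply Finset.sup'_congr _ rfl
        intro j _
        rw [← hX (Fin.castLE hhm.le j)]; exact (Finset.sup'_add _ _ _ _).symm
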